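/- arXiv:1107.1205 — 2 statements merged into one kernel-verified Lean document; each statement's English description precedes it below -/
import Mathlib

section
/- In the two-state counterexample system, linear and branching distances differ: let σ, τ be traces over K with σ₀ = τ₀, and consider the WTS where state s branches after one σ₀-step into continuations σ¹ and τ¹, while state t immediately branches into the full traces σ and τ. Then Tr(s) = Tr(t) = {σ, τ}, hence the Hausdorff linear distance d_L(s,t) = 0, while the branching distance equals min(d_T(σ,τ), d_T(τ,σ)). In particular, if d_T is not one-step indiscriminate (i.e., d_T(σ,τ) > 0 and d_T(τ,σ) > 0 for some σ, τ with σ₀ = τ₀), then d_L(s,t) = 0 < d_B(s,t). -/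
open ENNReal

/-- A finite path in a weighted transition system: a start state together
with a list of (weight, target-state) steps. -/
abbrev FPath (S K : Type*) := S × List (K × S)

/-- The last state of a finite path. -/
def FPath.last {S K : Type*} (p : FPath S K) : S :=
  (p.2.getLast?).elim p.1 Prod.snd

/-- Extending a finite path by one step. -/
def FPath.extend {S K : Type*} (p : FPath S K) (m : K × S) : FPath S K :=
  (p.1, p.2 ++ [m])

/-- A Player-1 strategy is valid if it always proposes a transition from the
last state of Player 1's path. -/
def ValidStrat1 {S K : Type*} (T : S → K → S → Prop)
    (θ : FPath S K → FPath S K → K × S) : Prop :=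
  ∀ p q : FPath S K, T p.last (θ p q).1 (θ p q).2

/-- A Player-2 strategy is valid if it always proposes a transition from the
last state of Player 2's path. -/
def ValidStrat2 {S K : Type*} (T : S → K → S → Prop)
    (θ : FPath S K → FPath S K → K × S) : Prop :=
  ∀ p q : FPath S K, T q.last (θ p q).1 (θ p q).2

/-- The sequence of configurations of the simulation game: in each round,
Player 1 extends the first path, then Player 2 extends the second path. -/
def play {S K : Type*} (θ1 θ2 : FPath S K → FPath S K → K × S) (s t : S) :
    ℕ → FPath S K × FPath S K
  | 0 => ((s, []), (t, []))
  | n + 1 =>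
    let c := play θ1 θ2 s t n
    let p' := c.1.extend (θ1 c.1 c.2)
    (p', c.2.extend (θ2 p' c.2))

/-- The trace built by Player 1. -/
def trace1 {S K : Type*} (θ1 θ2 : FPath S K → FPath S K → K × S) (s t : S)
    (n : ℕ) : K :=
  (θ1 (play θ1 θ2 s t n).1 (play θ1 θ2 s t n).2).1

/-- The trace built by Player 2. -/
def trace2 {S K : Type*} (θ1 θ2 : FPath S K → FPath S K → K × S) (s t : S)
    (n : ℕ) : K :=
  (θ2 ((play θ1 θ2 s t n).1.extend (θ1 (play θ1 θ2 s t n).1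
    (play θ1 θ2 s t n).2)) (play θ1 θ2 s t n).2).1

/-- The value of the simulation game (the branching distance). -/
noncomputable def gameValue {S K : Type*} (T : S → K → S → Prop)
    (dT : (ℕ → K) → (ℕ → K) → ℝ≥0∞) (s t : S) : ℝ≥0∞ :=
  ⨆ θ1 : {θ // ValidStrat1 T θ}, ⨅ θ2 : {θ // ValidStrat2 T θ},
    dT (trace1 θ1.1 θ2.1 s t) (trace2 θ1.1 θ2.1 s t)

/-- Infinite paths and their traces. -/
def IsInfPath {S K : Type*} (T : S → K → S → Prop) (s : S)
    (st : ℕ → S) (w : ℕ → K) : Prop :=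
  st 0 = s ∧ ∀ j, T (st j) (w j) (st (j + 1))

/-- The set of traces of infinite paths from a state. -/
def TrSet {S K : Type*} (T : S → K → S → Prop) (s : S) : Set (ℕ → K) :=
  {w | ∃ st : ℕ → S, IsInfPath T s st w}

/-- The state space of the counterexample system: `inl 0` = s, `inl 1` = the
intermediate state of s, `inl 2` = t, and `inr (b, n)` is the state of the
σ-chain (b = true) or τ-chain (b = false) about to emit the n-th weight. -/
abbrev S11 := Fin 3 ⊕ (Bool × ℕ)

/-- The transition relation of the counterexample system: s branches after
one σ₀-step into the tails of σ and τ, while t branches immediately into the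
full traces σ and τ. -/
inductive T11 {K : Type*} (σ τ : ℕ → K) : S11 → K → S11 → Prop
  | start : T11 σ τ (.inl 0) (σ 0) (.inl 1)
  | uL : T11 σ τ (.inl 1) (σ 1) (.inr (true, 2))
  | uR : T11 σ τ (.inl 1) (τ 1) (.inr (false, 2))
  | tL : T11 σ τ (.inl 2) (σ 0) (.inr (true, 1))
  | tR : T11 σ τ (.inl 2) (τ 0) (.inr (false, 1))
  | chainL (n : ℕ) : T11 σ τ (.inr (true, n)) (σ n) (.inr (true, n + 1))
  | chainR (n : ℕ) : T11 σ τ (.inr (false, n)) (τ n) (.inr (false, n + 1))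

section Aux
variable {K : Type*} {σ τ : ℕ → K}

def wt (σ τ : ℕ → K) (b : Bool) : ℕ → K := if b then σ else τ

lemma inv0 {k s'} (h : T11 σ τ (.inl 0) k s') : k = σ 0 ∧ s' = .inl 1 := by
  cases h; exact ⟨rfl, rfl⟩

lemma inv1 {k s'} (h : T11 σ τ (.inl 1) k s') :
    ∃ c : Bool, k = wt σ τ c 1 ∧ s' = .inr (c, 2) := by
  cases h
  · exact ⟨true, rfl, rfl⟩
  · exact ⟨false, rfl, rfl⟩

lemma inv2 {k s'} (h : T11 σ τ (.inl 2) k s') :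
    ∃ c : Bool, k = wt σ τ c 0 ∧ s' = .inr (c, 1) := by
  cases h
  · exact ⟨true, rfl, rfl⟩
  · exact ⟨false, rfl, rfl⟩

lemma invChain {d n k s'} (h : T11 σ τ (.inr (d, n)) k s') :
    k = wt σ τ d n ∧ s' = .inr (d, n + 1) := by
  cases h <;> simp [wt]

def step (σ τ : ℕ → K) (b : Bool) : S11 → K × S11
  | .inl i => if i = 0 then (σ 0, .inl 1)
      else if i = 1 then (wt σ τ b 1, .inr (b, 2))
      else (wt σ τ b 0, .inr (b, 1))
  | .inr (d, n) => (wt σ τ d n, .inr (d, n + 1))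

lemma step_valid (b : Bool) (s : S11) :
    T11 σ τ s (step σ τ b s).1 (step σ τ b s).2 := by
  rcases s with i | ⟨d, n⟩
  · fin_cases i <;> cases b <;>
      simp [step, wt] <;>
      first
        | exact T11.start
        | exact T11.uL
        | exact T11.uR
        | exact T11.tL
        | exact T11.tR
  · cases d <;> simp [step, wt]
    · exact T11.chainR n
    · exact T11.chainL n

lemma trSet_s (h0 : σ 0 = τ 0) : TrSet (T11 σ τ) (.inl 0) = {σ, τ} := by
  ext w
  constructor
  · rintro ⟨st, hst0, hT⟩
    have h1 := inv0 (show T11 σ τ (.inl 0) (w 0) (st 1) from hst0 ▸ hT 0)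
    have h2 := inv1 (show T11 σ τ (.inl 1) (w 1) (st 2) from h1.2 ▸ hT 1)
    obtain ⟨c, hw1, hs2⟩ := h2
    have hchain : ∀ n, st (n + 2) = .inr (c, n + 2) := by
      intro n
      induction n with
      | zero => exact hs2
      | succ m ih =>
        have := invChain (show T11 σ τ (.inr (c, m + 2)) (w (m + 2)) (st (m + 3)) from
          ih ▸ hT (m + 2))
        exact this.2
    have hwn : ∀ n, w (n + 2) = wt σ τ c (n + 2) := by
      intro n
      exact (invChain (show T11 σ τ (.inr (c, n + 2)) (w (n + 2)) (st (n + 3)) from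
        (hchain n) ▸ hT (n + 2))).1
    have hw : w = wt σ τ c := by
      funext n
      match n with
      | 0 => rw [h1.1]; cases c <;> simp [wt, h0]
      | 1 => exact hw1
      | (m+2) => exact hwn m
    cases c
    · right; simpa [wt] using hw
    · left; simpa [wt] using hw
  · intro hw
    rcases hw with hw | hw
    · refine ⟨fun n => match n with
        | 0 => .inl 0 | 1 => .inl 1 | (m+2) => .inr (true, m+2), rfl, ?_⟩
      intro j
      subst hw
      match j with
      | 0 => exact T11.start
      | 1 => exact T11.uL
      | (m+2) => exact T11.chainL _
    · refine ⟨fun n => match n with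
        | 0 => .inl 0 | 1 => .inl 1 | (m+2) => .inr (false, m+2), rfl, ?_⟩
      intro j
      subst hw
      match j with
      | 0 => exact h0 ▸ T11.start
      | 1 => exact T11.uR
      | (m+2) => exact T11.chainR _

lemma trSet_t (h0 : σ 0 = τ 0) : TrSet (T11 σ τ) (.inl 2) = {σ, τ} := by
  ext w
  constructor
  · rintro ⟨st, hst0, hT⟩
    obtain ⟨c, hw0, hs1⟩ := inv2 (show T11 σ τ (.inl 2) (w 0) (st 1) from hst0 ▸ hT 0)
    have hchain : ∀ n, st (n + 1) = .inr (c, n + 1) := by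
      intro n
      induction n with
      | zero => exact hs1
      | succ m ih =>
        exact (invChain (show T11 σ τ (.inr (c, m + 1)) (w (m + 1)) (st (m + 2)) from
          ih ▸ hT (m + 1))).2
    have hw : w = wt σ τ c := by
      funext n
      match n with
      | 0 => exact hw0
      | (m+1) => exact (invChain (show T11 σ τ (.inr (c, m + 1)) (w (m + 1)) (st (m + 2)) from
          (hchain m) ▸ hT (m + 1))).1
    cases c
    · right; simpa [wt] using hw
    · left; simpa [wt] using hw
  · intro hw
    rcases hw with hw | hw
    · refine ⟨fun n => match n with
        | 0 => .inl 2 | (m+1) => .inr (true, m+1), rfl, ?_⟩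
      intro j
      subst hw
      match j with
      | 0 => exact T11.tL
      | (m+1) => exact T11.chainL _
    · refine ⟨fun n => match n with
        | 0 => .inl 2 | (m+1) => .inr (false, m+1), rfl, ?_⟩
      intro j
      subst hw
      match j with
      | 0 => exact T11.tR
      | (m+1) => exact T11.chainR _

lemma last_extend {S K : Type*} (p : FPath S K) (m : K × S) :
    (p.extend m).last = m.2 := by
  simp [FPath.last, FPath.extend]

def P1 (σ : ℕ → K) : FPath S11 K := (.inl 0, [(σ 0, .inl 1)])

def Q0 : FPath S11 K := (.inl 2, [])

def Q1 (σ τ : ℕ → K) (b : Bool) : FPath S11 K := (.inl 2, [(wt σ τ b 0, .inr (b, 1))])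

lemma P1_last : (P1 σ).last = .inl 1 := rfl

lemma Q1_last (b : Bool) : (Q1 σ τ b).last = .inr (b, 1) := rfl

lemma play_succ {S K : Type*} (θ1 θ2 : FPath S K → FPath S K → K × S) (s t : S) (n : ℕ) :
    play θ1 θ2 s t (n + 1) =
      ((play θ1 θ2 s t n).1.extend (θ1 (play θ1 θ2 s t n).1 (play θ1 θ2 s t n).2),
       (play θ1 θ2 s t n).2.extend
         (θ2 ((play θ1 θ2 s t n).1.extend (θ1 (play θ1 θ2 s t n).1 (play θ1 θ2 s t n).2))
           (play θ1 θ2 s t n).2)) := rfl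

lemma play_spec (h0 : σ 0 = τ 0) (θ1 θ2 : FPath S11 K → FPath S11 K → K × S11)
    (h1 : ValidStrat1 (T11 σ τ) θ1) (h2 : ValidStrat2 (T11 σ τ) θ2) :
    ∃ b c : Bool,
      θ2 (P1 σ) Q0 = (wt σ τ b 0, .inr (b, 1)) ∧
      θ1 (P1 σ) (Q1 σ τ b) = (wt σ τ c 1, .inr (c, 2)) ∧
      trace1 θ1 θ2 (.inl 0) (.inl 2) = wt σ τ c ∧
      trace2 θ1 θ2 (.inl 0) (.inl 2) = wt σ τ b := by
  have hfirst : θ1 ((.inl 0, []) : FPath S11 K) Q0 = (σ 0, .inl 1) := by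
    have := inv0 (h1 ((.inl 0, []) : FPath S11 K) Q0)
    exact Prod.ext this.1 this.2
  obtain ⟨b, hb1, hb2⟩ := inv2 (h2 (P1 σ) Q0)
  have hb : θ2 (P1 σ) Q0 = (wt σ τ b 0, .inr (b, 1)) := Prod.ext hb1 hb2
  have hplay0 : play θ1 θ2 (.inl 0 : S11) (.inl 2) 0 = (((.inl 0 : S11), []), Q0) := rfl
  have hextP : FPath.extend (((.inl 0 : S11), ([] : List (K × S11))) : FPath S11 K) (σ 0, .inl 1)
      = P1 σ := rfl
  have hplay1 : play θ1 θ2 (.inl 0 : S11) (.inl 2) 1 = (P1 σ, Q1 σ τ b) := by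
    rw [play_succ, hplay0]
    simp only [hfirst, hextP, hb]
    rfl
  obtain ⟨c, hc1, hc2⟩ := inv1 (h1 (P1 σ) (Q1 σ τ b))
  have hc : θ1 (P1 σ) (Q1 σ τ b) = (wt σ τ c 1, .inr (c, 2)) := Prod.ext hc1 hc2
  have lastkey : ∀ n, ((play θ1 θ2 (.inl 0 : S11) (.inl 2) (n+2)).1).last = .inr (c, n+2) ∧
      ((play θ1 θ2 (.inl 0 : S11) (.inl 2) (n+2)).2).last = .inr (b, n+2) := by
    intro n
    induction n with
    | zero =>
      rw [show (0:ℕ)+2 = 1+1 from rfl, play_succ, hplay1]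
      refine ⟨by rw [last_extend, hc2], ?_⟩
      rw [last_extend]
      exact (invChain (show T11 σ τ (.inr (b, 1)) _ _ from
        (Q1_last b) ▸ h2 ((P1 σ).extend (θ1 (P1 σ) (Q1 σ τ b))) (Q1 σ τ b))).2
    | succ m ih =>
      rw [show m+1+2 = (m+2)+1 from rfl, play_succ]
      set C := play θ1 θ2 (.inl 0 : S11) (.inl 2) (m+2) with hC
      refine ⟨?_, ?_⟩
      · rw [last_extend]
        exact (invChain (show T11 σ τ (.inr (c, m+2)) _ _ from ih.1 ▸ h1 C.1 C.2)).2
      · rw [last_extend]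
        exact (invChain (show T11 σ τ (.inr (b, m+2)) _ _ from
          ih.2 ▸ h2 (C.1.extend (θ1 C.1 C.2)) C.2)).2
  refine ⟨b, c, hb, hc, ?_, ?_⟩
  · -- trace1
    funext n
    match n with
    | 0 =>
      show (θ1 _ _).1 = _
      rw [hplay0]
      rw [show ((θ1 ((.inl 0 : S11), ([] : List (K × S11))) Q0).1) = σ 0 by rw [hfirst]]
      cases c <;> simp [wt, h0]
    | 1 =>
      show (θ1 _ _).1 = _
      rw [hplay1, hc]
    | (m+2) =>
      show (θ1 _ _).1 = _
      set C := play θ1 θ2 (.inl 0 : S11) (.inl 2) (m+2) with hC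
      exact (invChain (show T11 σ τ (.inr (c, m+2)) _ _ from (lastkey m).1 ▸ h1 C.1 C.2)).1
  · -- trace2
    funext n
    match n with
    | 0 =>
      show (θ2 _ _).1 = _
      rw [hplay0]
      simp only [hfirst]
      rw [hextP, hb]
    | 1 =>
      show (θ2 _ _).1 = _
      rw [hplay1]
      exact (invChain (show T11 σ τ (.inr (b, 1)) _ _ from
        (Q1_last b) ▸ h2 ((P1 σ).extend (θ1 (P1 σ) (Q1 σ τ b))) (Q1 σ τ b))).1
    | (m+2) =>
      show (θ2 _ _).1 = _
      set C := play θ1 θ2 (.inl 0 : S11) (.inl 2) (m+2) with hC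
      exact (invChain (show T11 σ τ (.inr (b, m+2)) _ _ from
        (lastkey m).2 ▸ h2 (C.1.extend (θ1 C.1 C.2)) C.2)).1

def pun (q : FPath S11 K) : Bool :=
  match q.last with
  | .inr (bb, _) => !bb
  | _ => true

def punish (σ τ : ℕ → K) : FPath S11 K → FPath S11 K → K × S11 :=
  fun p q => step σ τ (pun q) p.last

lemma gameValue_eq (dT : (ℕ → K) → (ℕ → K) → ℝ≥0∞) (hrefl : ∀ σ, dT σ σ = 0)
    (h0 : σ 0 = τ 0) :
    gameValue (T11 σ τ) dT (.inl 0) (.inl 2) = min (dT σ τ) (dT τ σ) := by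
  have hpv : ValidStrat1 (T11 σ τ) (punish σ τ) := fun p q => step_valid _ _
  have hcv : ∀ bb : Bool, ValidStrat2 (T11 σ τ) (fun _ q => step σ τ bb q.last) :=
    fun bb p q => step_valid _ _
  apply le_antisymm
  · -- upper bound
    apply iSup_le
    rintro ⟨θ1, hθ1⟩
    have key : ∀ bb : Bool, ∃ cc : Bool,
        θ1 (P1 σ) (Q1 σ τ bb) = (wt σ τ cc 1, .inr (cc, 2)) ∧
        dT (trace1 θ1 (fun _ q => step σ τ bb q.last) (.inl 0) (.inl 2))
           (trace2 θ1 (fun _ q => step σ τ bb q.last) (.inl 0) (.inl 2))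
          = dT (wt σ τ cc) (wt σ τ bb) := by
      intro bb
      obtain ⟨b', cc, hb', hc, ht1, ht2⟩ := play_spec h0 θ1 _ hθ1 (hcv bb)
      have hstep : step σ τ bb (Q0 (K := K)).last = (wt σ τ bb 0, .inr (bb, 1)) := by
        cases bb <;> rfl
      rw [hstep] at hb'
      have hbb : bb = b' := by cases bb <;> cases b' <;> simp_all
      subst hbb
      exact ⟨cc, hc, by rw [ht1, ht2]⟩
    obtain ⟨ct, hct, hpt⟩ := key true
    obtain ⟨cf, hcf, hpf⟩ := key false
    cases ct
    · cases cf
      · -- c(false) = false : copy false gives payoff 0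
        refine le_trans (iInf_le_of_le ⟨_, hcv false⟩ ?_) zero_le
        rw [hpf]
        simp [wt, hrefl]
      · -- c(true)=false, c(false)=true : payoffs dT τ σ and dT σ τ
        apply le_min
        · refine iInf_le_of_le ⟨_, hcv false⟩ ?_
          rw [hpf]; simp [wt]
        · refine iInf_le_of_le ⟨_, hcv true⟩ ?_
          rw [hpt]; simp [wt]
    · -- c(true) = true : copy true gives payoff 0
      refine le_trans (iInf_le_of_le ⟨_, hcv true⟩ ?_) zero_le
      rw [hpt]
      simp [wt, hrefl]
  · -- lower bound via punishing strategy
    apply le_iSup_of_le ⟨punish σ τ, hpv⟩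
    apply le_iInf
    rintro ⟨θ2, hθ2⟩
    obtain ⟨b, c, hb, hc, ht1, ht2⟩ := play_spec h0 (punish σ τ) θ2 hpv hθ2
    have hpun : punish σ τ (P1 σ) (Q1 σ τ b) = (wt σ τ (!b) 1, .inr (!b, 2)) := by
      cases b <;> rfl
    rw [hpun] at hc
    have hcb : c = !b := by cases b <;> cases c <;> simp_all
    rw [ht1, ht2, hcb]
    cases b
    · exact min_le_left (dT σ τ) (dT τ σ)
    · exact min_le_right (dT σ τ) (dT τ σ)

end Aux

/-- In the two-state counterexample system, the trace sets of `s` and `t`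
coincide (hence the Hausdorff linear distance is 0), while the branching
distance (the game value) equals `min (dT σ τ) (dT τ σ)`; in particular if
`dT` is not one-step indiscriminate then the linear distance is strictly
below the branching distance. -/
theorem linear_lt_branching_counterexample
    {K : Type*} (dT : (ℕ → K) → (ℕ → K) → ℝ≥0∞)
    (hrefl : ∀ σ, dT σ σ = 0)
    (htri : ∀ σ τ υ, dT σ υ ≤ dT σ τ + dT τ υ)
    (σ τ : ℕ → K) (h0 : σ 0 = τ 0) :
    TrSet (T11 σ τ) (.inl 0) = {σ, τ} ∧
    TrSet (T11 σ τ) (.inl 2) = {σ, τ} ∧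
    (⨆ σ' : TrSet (T11 σ τ) (.inl 0), ⨅ τ' : TrSet (T11 σ τ) (.inl 2),
      dT σ' τ') = 0 ∧
    gameValue (T11 σ τ) dT (.inl 0) (.inl 2) = min (dT σ τ) (dT τ σ) ∧
    (dT σ τ ≠ 0 → dT τ σ ≠ 0 →
      (⨆ σ' : TrSet (T11 σ τ) (.inl 0), ⨅ τ' : TrSet (T11 σ τ) (.inl 2),
        dT σ' τ') < gameValue (T11 σ τ) dT (.inl 0) (.inl 2)) := by
  have h3 : (⨆ σ' : TrSet (T11 σ τ) (.inl 0), ⨅ τ' : TrSet (T11 σ τ) (.inl 2),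
      dT σ' τ') = 0 := by
    apply le_antisymm _ zero_le
    apply iSup_le
    rintro ⟨w, hw⟩
    have hw2 : w ∈ TrSet (T11 σ τ) (.inl 2) := by
      rw [trSet_t h0]
      rw [trSet_s h0] at hw
      exact hw
    calc (⨅ τ' : TrSet (T11 σ τ) (.inl 2), dT w τ') ≤ dT w w :=
          iInf_le (fun τ' : TrSet (T11 σ τ) (.inl 2) => dT w τ') ⟨w, hw2⟩
      _ = 0 := hrefl w
  refine ⟨trSet_s h0, trSet_t h0, h3, gameValue_eq dT hrefl h0, fun hστ hτσ => ?_⟩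
  rw [h3, gameValue_eq dT hrefl h0]
  exact lt_min (pos_iff_ne_zero.2 hστ) (pos_iff_ne_zero.2 hτσ)
end

section
/- Pointwise recursion characterizes discrete simulation: let (S,T) be a non-blocking K-weighted transition system and define I on [0,∞]^{S×S} by I(h)(s,t) = sup_{s→ˣs'} inf_{t→ʸt'} F(x,y,h(s',t')) where F(x,y,z) = z if x = y and ∞ otherwise. Let h* be the least fixed point of I. Then h*(s,t) = 0 if and only if there exists a simulation relation R ⊆ S × S with (s,t) ∈ R, i.e., a relation such that whenever (s',t') ∈ R and s'→ˣs'', there exists t'→ˣt'' with (s'',t'') ∈ R. -/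
open ENNReal Classical in
/-- The least fixed point of the discrete-distance iterator is 0 exactly on
pairs related by a simulation. -/
theorem discrete_recursion_characterizes_simulation
    {S K : Type*} (T : S → K → S → Prop)
    (hnb : ∀ s : S, ∃ x s', T s x s')
    (F : K → K → ℝ≥0∞ → ℝ≥0∞)
    (hF : ∀ (x y : K) (z : ℝ≥0∞), F x y z = (if x = y then z else ⊤))
    (I : (S → S → ℝ≥0∞) → (S → S → ℝ≥0∞))
    (hI : ∀ (h : S → S → ℝ≥0∞) (s t : S),
      I h s t = ⨆ p : {p : K × S // T s p.1 p.2},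
        ⨅ q : {q : K × S // T t q.1 q.2}, F p.1.1 q.1.1 (h p.1.2 q.1.2))
    (hstar : S → S → ℝ≥0∞)
    (hfix : I hstar = hstar)
    (hleast : ∀ h : S → S → ℝ≥0∞, I h = h → hstar ≤ h) :
    ∀ s t : S, hstar s t = 0 ↔
      ∃ R : S → S → Prop, R s t ∧
        ∀ s' t', R s' t' → ∀ x s'', T s' x s'' →
          ∃ t'', T t' x t'' ∧ R s'' t'' := by
  intro s t
  constructor
  · -- hstar s t = 0 → simulation
    intro h0
    refine ⟨fun a b => hstar a b < ⊤, by show hstar s t < ⊤; rw [h0]; exact ENNReal.zero_lt_top, ?_⟩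
    intro s' t' hlt x s'' hT
    have hfp : hstar s' t' = I hstar s' t' := by rw [hfix]
    rw [hI] at hfp
    have hle : (⨅ q : {q : K × S // T t' q.1 q.2},
        F x q.1.1 (hstar s'' q.1.2)) ≤ hstar s' t' := by
      rw [hfp]
      exact le_iSup (fun p : {p : K × S // T s' p.1 p.2} =>
        ⨅ q : {q : K × S // T t' q.1 q.2}, F p.1.1 q.1.1 (hstar p.1.2 q.1.2))
        ⟨(x, s''), hT⟩
    have hinf : (⨅ q : {q : K × S // T t' q.1 q.2},
        F x q.1.1 (hstar s'' q.1.2)) < ⊤ := lt_of_le_of_lt hle hlt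
    rw [iInf_lt_iff] at hinf
    obtain ⟨q, hq⟩ := hinf
    rw [hF] at hq
    by_cases hxy : x = q.1.1
    · rw [if_pos hxy] at hq
      exact ⟨q.1.2, by rw [hxy]; exact q.2, hq⟩
    · rw [if_neg hxy] at hq
      exact absurd hq (lt_irrefl ⊤)
  · -- simulation → hstar s t = 0
    rintro ⟨R, hRst, hSim⟩
    set Rm : S → S → Prop := fun a b => ∃ R' : S → S → Prop, R' a b ∧
      ∀ s' t', R' s' t' → ∀ x s'', T s' x s'' →
        ∃ t'', T t' x t'' ∧ R' s'' t'' with hRm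
    have hSimm : ∀ s' t', Rm s' t' → ∀ x s'', T s' x s'' →
        ∃ t'', T t' x t'' ∧ Rm s'' t'' := by
      rintro s' t' ⟨R', hR', hsimR'⟩ x s'' hT
      obtain ⟨t'', hTt, hR''⟩ := hsimR' s' t' hR' x s'' hT
      exact ⟨t'', hTt, R', hR'', hsimR'⟩
    set h : S → S → ℝ≥0∞ := fun a b => if Rm a b then 0 else ⊤ with hh
    have hIh : I h = h := by
      funext a b
      rw [hI]
      by_cases hab : Rm a b
      · rw [hh]; simp only [if_pos hab]
        refine le_antisymm (iSup_le ?_) zero_le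
        rintro ⟨⟨x, s''⟩, hT⟩
        obtain ⟨t'', hTt, hRm''⟩ := hSimm a b hab x s'' hT
        refine le_trans (iInf_le _ ⟨(x, t''), hTt⟩) ?_
        simp [hF, hRm'']
      · rw [hh]; simp only [if_neg hab]
        -- there must be a transition of a that b cannot match within Rm
        have hbad : ∃ x s'', T a x s'' ∧ ∀ t'', T b x t'' → ¬ Rm s'' t'' := by
          by_contra hcon
          push_neg at hcon
          apply hab
          refine ⟨fun a' b' => Rm a' b' ∨ (a' = a ∧ b' = b), Or.inr ⟨rfl, rfl⟩, ?_⟩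
          rintro s' t' (hR' | ⟨rfl, rfl⟩) x s'' hT
          · obtain ⟨t'', hTt, hRm''⟩ := hSimm s' t' hR' x s'' hT
            exact ⟨t'', hTt, Or.inl hRm''⟩
          · obtain ⟨t'', hTt, hRm''⟩ := hcon x s'' hT
            exact ⟨t'', hTt, Or.inl hRm''⟩
        obtain ⟨x, s'', hT, hnomatch⟩ := hbad
        refine top_unique (le_trans ?_
          (le_iSup (fun p : {p : K × S // T a p.1 p.2} =>
            ⨅ q : {q : K × S // T b q.1 q.2}, F p.1.1 q.1.1 (h p.1.2 q.1.2))
            ⟨(x, s''), hT⟩))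
        refine le_iInf ?_
        rintro ⟨⟨y, t''⟩, hTt⟩
        rw [hF]
        by_cases hxy : x = y
        · subst hxy
          have : ¬ Rm s'' t'' := hnomatch t'' hTt
          simp [hh, this]
        · simp [hxy]
    have := hleast h hIh s t
    have hRmst : Rm s t := ⟨R, hRst, hSim⟩
    rw [hh] at this
    simp only [if_pos hRmst] at this
    exact le_antisymm this zero_le
end
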